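/- Let R be an integral domain in which every finitely generated ideal has only finitely many minimal primes (an FGFC domain). Then the height function ht : Ideal(R) → ℕ∞ is an ideal valuation on R, where ht(I) is the infimum of the heights of the prime ideals containing I (so ht(R) = ∞ by the convention that the infimum over the empty set is ∞). -/

import Mathlib

/-- An ideal valuation on an integral domain `R`. -/
def IsIdealValuation (R : Type*) [CommRing R] (ν : Ideal R → ℕ∞) : Prop :=
  ν ⊥ = 0 ∧ ν ⊤ = ⊤ ∧
  (∀ I J : Ideal R, min (ν I) (ν J) ≤ ν (I * J)) ∧
  (∀ I : Ideal R, ν I = ⨆ (J : Ideal R) (_ : J ≤ I) (_ : J.FG), ν J)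

/-- The height of an ideal: the infimum of the heights of the prime ideals containing it
(the infimum over the empty set being `∞`). -/
noncomputable def idealHeight (R : Type*) [CommRing R] (I : Ideal R) : ℕ∞ :=
  ⨅ (P : PrimeSpectrum R) (_ : I ≤ P.asIdeal), Order.height P

lemma idealHeight_le {R : Type*} [CommRing R] {I : Ideal R} (P : PrimeSpectrum R)
    (h : I ≤ P.asIdeal) : idealHeight R I ≤ Order.height P :=
  iInf₂_le P h

lemma le_idealHeight {R : Type*} [CommRing R] {I : Ideal R} {n : ℕ∞}
    (h : ∀ P : PrimeSpectrum R, I ≤ P.asIdeal → n ≤ Order.height P) :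
    n ≤ idealHeight R I :=
  le_iInf₂ h

lemma idealHeight_mono {R : Type*} [CommRing R] {I J : Ideal R} (h : I ≤ J) :
    idealHeight R I ≤ idealHeight R J :=
  le_idealHeight fun P hP => idealHeight_le P (h.trans hP)

/-- Key inductive step. -/
lemma exists_fg_le_idealHeight {R : Type*} [CommRing R]
    (hFGFC : ∀ I : Ideal R, I.FG → I.minimalPrimes.Finite)
    (I : Ideal R) (n : ℕ) (hn : (n : ℕ∞) ≤ idealHeight R I) :
    ∃ J : Ideal R, J ≤ I ∧ J.FG ∧ (n : ℕ∞) ≤ idealHeight R J := by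
  induction n with
  | zero => exact ⟨⊥, bot_le, ⟨∅, by simp⟩, by simp⟩
  | succ n IH =>
    obtain ⟨J, hJI, hJfg, hJn⟩ := IH (le_trans (by exact_mod_cast Nat.cast_le.mpr n.le_succ) hn)
    -- the set of minimal primes of J of height exactly n
    set Ps : Set (Ideal R) := {P ∈ J.minimalPrimes | ∀ hp : P.IsPrime,
        Order.height (⟨P, hp⟩ : PrimeSpectrum R) = (n : ℕ∞)} with hPs
    have hPsfin : Ps.Finite := (hFGFC J hJfg).subset (Set.sep_subset _ _)
    -- I is not contained in any member of Ps
    have hInotle : ∀ P ∈ Ps, ¬ I ≤ P := by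
      rintro P ⟨hPmin, hPht⟩ hle
      have hp : P.IsPrime := hPmin.1.1
      have := idealHeight_le (I := I) ⟨P, hp⟩ hle
      rw [hPht hp] at this
      have := le_trans hn this
      exact absurd (Nat.cast_le.mp this : n + 1 ≤ n) (by omega)
    -- prime avoidance
    have : ¬ ((I : Set R) ⊆ ⋃ P ∈ (hPsfin.toFinset : Set (Ideal R)), (id P : Ideal R)) := by
      rw [Ideal.subset_union_prime ⊥ ⊥ (fun P hP _ _ => by
        exact (hPsfin.mem_toFinset.mp hP).1.1.1)]
      rintro ⟨P, hP, hle⟩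
      exact hInotle P (hPsfin.mem_toFinset.mp hP) hle
    obtain ⟨x, hxI, hxPs⟩ : ∃ x ∈ I, ∀ P ∈ Ps, x ∉ P := by
      rw [Set.not_subset] at this
      obtain ⟨x, hxI, hx⟩ := this
      refine ⟨x, hxI, fun P hP hxP => hx ?_⟩
      exact Set.mem_biUnion (hPsfin.mem_toFinset.mpr hP) hxP
    refine ⟨J ⊔ Ideal.span {x}, sup_le hJI (by rwa [Ideal.span_singleton_le_iff_mem]),
      Submodule.FG.sup hJfg (Submodule.fg_span_singleton x), ?_⟩
    refine le_idealHeight fun Q hQ => ?_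
    by_contra hcon
    push_neg at hcon
    -- Q is a prime containing J ⊔ (x) with height Q < n+1, i.e. ≤ n
    have hJQ : J ≤ Q.asIdeal := le_trans le_sup_left hQ
    have hxQ : x ∈ Q.asIdeal := hQ (le_sup_right (α := Ideal R) (Ideal.mem_span_singleton_self x))
    have hQfin : Order.height Q ≤ (n : ℕ∞) := by
      have hne : Order.height Q ≠ ⊤ := (hcon.trans (WithTop.coe_lt_top (n+1))).ne
      obtain ⟨k, hk⟩ := WithTop.ne_top_iff_exists.mp hne
      rw [← hk] at hcon ⊢
      exact Nat.cast_le.mpr (Nat.lt_succ_iff.mp (Nat.cast_lt.mp hcon))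
    obtain ⟨P, hPmin, hPQ⟩ := Ideal.exists_minimalPrimes_le (J := Q.asIdeal) hJQ
    have hp : P.IsPrime := hPmin.1.1
    have hnP : (n : ℕ∞) ≤ Order.height (⟨P, hp⟩ : PrimeSpectrum R) :=
      le_trans hJn (idealHeight_le _ hPmin.1.2)
    have hPeqQ : (⟨P, hp⟩ : PrimeSpectrum R) = Q := by
      by_contra hne
      have hlt : (⟨P, hp⟩ : PrimeSpectrum R) < Q := lt_of_le_of_ne hPQ hne
      have := Order.height_strictMono hlt (lt_of_le_of_lt (Order.height_mono hlt.le)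
        (hQfin.trans_lt (by exact_mod_cast lt_top_iff_ne_top.mpr (by simp) : (n:ℕ∞) < ⊤)))
      exact absurd (hnP.trans_lt (this.trans_le hQfin)) (lt_irrefl _)
    have hQPs : Q.asIdeal ∈ Ps := by
      refine ⟨hPeqQ ▸ hPmin, fun hq => le_antisymm (hPeqQ ▸ hQfin) (hPeqQ ▸ hnP)⟩
    exact hxPs Q.asIdeal hQPs hxQ

theorem height_isIdealValuation_of_FGFC
    (R : Type*) [CommRing R] [IsDomain R]
    (hFGFC : ∀ I : Ideal R, I.FG → I.minimalPrimes.Finite) :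
    IsIdealValuation R (idealHeight R) := by
  refine ⟨?_, ?_, ?_, ?_⟩
  · -- ν ⊥ = 0
    refine le_antisymm ?_ zero_le
    have h0 : idealHeight R ⊥ ≤ Order.height (⟨⊥, Ideal.bot_prime⟩ : PrimeSpectrum R) :=
      idealHeight_le _ bot_le
    rwa [Order.height_eq_zero.mpr (fun Q hQ => by
      have : Q.asIdeal ≤ ⊥ := hQ
      have : Q.asIdeal = ⊥ := le_bot_iff.mp this
      exact le_of_eq (PrimeSpectrum.ext this.symm))] at h0
  · -- ν ⊤ = ⊤
    rw [idealHeight, iInf_eq_top]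
    intro P
    rw [iInf_eq_top]
    intro h
    exact absurd (top_le_iff.mp h) P.isPrime.ne_top
  · -- IV2
    intro I J
    refine le_idealHeight fun P hP => ?_
    rcases P.isPrime.mul_le.mp hP with h | h
    · exact le_trans (min_le_left _ _) (idealHeight_le P h)
    · exact le_trans (min_le_right _ _) (idealHeight_le P h)
  · -- IV3
    intro I
    refine le_antisymm ?_ ?_
    · by_contra hcon
      push_neg at hcon
      set s := ⨆ (J : Ideal R) (_ : J ≤ I) (_ : J.FG), idealHeight R J with hs
      have hstop : s ≠ ⊤ := fun h => absurd (h ▸ hcon) (by simp)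
      obtain ⟨m, hm⟩ := WithTop.ne_top_iff_exists.mp hstop
      rw [← hm] at hcon
      have hm1 : ((m + 1 : ℕ) : ℕ∞) ≤ idealHeight R I := by
        push_cast
        exact Order.add_one_le_of_lt hcon
      obtain ⟨J, hJI, hJfg, hJht⟩ := exists_fg_le_idealHeight hFGFC I (m + 1) hm1
      have : idealHeight R J ≤ s := le_iSup₂_of_le J hJI (le_iSup_of_le hJfg le_rfl)
      rw [← hm] at this
      have := hJht.trans this
      exact absurd (Nat.cast_le.mp this : m + 1 ≤ m) (by omega)
    · refine iSup₂_le fun J hJ => iSup_le fun _ => idealHeight_mono hJ
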